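/- For integers k ≥ 1 and l and every group automorphism φ of Γ_{k,l}, there exist integers n and m with m ≠ 0 such that φ(x) = z^n x^m. -/

import Mathlib

namespace Stmt7

/-- The free group generators `x, y, z, t` for the `Nil⁴` group. -/
private abbrev gx : FreeGroup (Fin 4) := FreeGroup.of 0
private abbrev gy : FreeGroup (Fin 4) := FreeGroup.of 1
private abbrev gz : FreeGroup (Fin 4) := FreeGroup.of 2
private abbrev gt : FreeGroup (Fin 4) := FreeGroup.of 3

/-- The relators of the presentation
`⟨x, y, z, t | t x t⁻¹ = x, t y t⁻¹ = xᵏ y zˡ, t z t⁻¹ = z, [x,y] = z, xz = zx, yz = zy⟩`. -/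
def nilRels (k l : ℤ) : Set (FreeGroup (Fin 4)) :=
  { gt * gx * gt⁻¹ * gx⁻¹,
    gt * gy * gt⁻¹ * (gx ^ k * gy * gz ^ l)⁻¹,
    gt * gz * gt⁻¹ * gz⁻¹,
    gx * gy * gx⁻¹ * gy⁻¹ * gz⁻¹,
    gx * gz * gx⁻¹ * gz⁻¹,
    gy * gz * gy⁻¹ * gz⁻¹ }
/-- `Γ k l`, the (finite index model of the) fundamental group of a closed `Nil⁴`-manifold. -/
abbrev Γ (k l : ℤ) : Type := PresentedGroup (nilRels k l)

/-- The images of the generators `x` and `z` in `Γ k l`. -/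
def xΓ (k l : ℤ) : Γ k l := PresentedGroup.of 0
def zΓ (k l : ℤ) : Γ k l := PresentedGroup.of 2

/-- The images of the generators `y` and `t` in `Γ k l`. -/
def yΓ (k l : ℤ) : Γ k l := PresentedGroup.of 1
def tΓ (k l : ℤ) : Γ k l := PresentedGroup.of 3

variable (k l : ℤ)

lemma mk_rel (r : FreeGroup (Fin 4)) (hr : r ∈ nilRels k l) :
    (QuotientGroup.mk r : Γ k l) = 1 :=
  (QuotientGroup.eq_one_iff r).mpr (Subgroup.subset_normalClosure hr)

lemma rel_tx : tΓ k l * xΓ k l * (tΓ k l)⁻¹ * (xΓ k l)⁻¹ = 1 := by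
  have h := mk_rel k l _ (show _ ∈ nilRels k l from Set.mem_insert _ _)
  exact h

lemma rel_ty : tΓ k l * yΓ k l * (tΓ k l)⁻¹ = xΓ k l ^ k * yΓ k l * zΓ k l ^ l := by
  have h := mk_rel k l (gt * gy * gt⁻¹ * (gx ^ k * gy * gz ^ l)⁻¹) (by right; left; rfl)
  simp only [QuotientGroup.mk_mul, QuotientGroup.mk_inv, QuotientGroup.mk_zpow] at h
  rw [mul_inv_eq_one] at h
  exact h

lemma rel_tz : tΓ k l * zΓ k l * (tΓ k l)⁻¹ * (zΓ k l)⁻¹ = 1 := by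
  have h := mk_rel k l (gt * gz * gt⁻¹ * gz⁻¹) (by right; right; left; rfl)
  exact h

lemma rel_xy : xΓ k l * yΓ k l * (xΓ k l)⁻¹ * (yΓ k l)⁻¹ = zΓ k l := by
  have h := mk_rel k l (gx * gy * gx⁻¹ * gy⁻¹ * gz⁻¹) (by right; right; right; left; rfl)
  simp only [QuotientGroup.mk_mul, QuotientGroup.mk_inv] at h
  rw [mul_inv_eq_one] at h
  exact h

lemma rel_xz : xΓ k l * zΓ k l * (xΓ k l)⁻¹ * (zΓ k l)⁻¹ = 1 := by
  have h := mk_rel k l (gx * gz * gx⁻¹ * gz⁻¹) (by right; right; right; right; left; rfl)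
  exact h

lemma rel_yz : yΓ k l * zΓ k l * (yΓ k l)⁻¹ * (zΓ k l)⁻¹ = 1 := by
  have h := mk_rel k l (gy * gz * gy⁻¹ * gz⁻¹)
    (by right; right; right; right; right; rfl)
  exact h

/- Commute facts -/
lemma c_tx : Commute (tΓ k l) (xΓ k l) := by
  have h := rel_tx k l
  rw [mul_inv_eq_one, mul_inv_eq_iff_eq_mul] at h
  exact h

lemma c_tz : Commute (tΓ k l) (zΓ k l) := by
  have h := rel_tz k l
  rw [mul_inv_eq_one, mul_inv_eq_iff_eq_mul] at h
  exact h

lemma c_xz : Commute (xΓ k l) (zΓ k l) := by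
  have h := rel_xz k l
  rw [mul_inv_eq_one, mul_inv_eq_iff_eq_mul] at h
  exact h

lemma c_yz : Commute (yΓ k l) (zΓ k l) := by
  have h := rel_yz k l
  rw [mul_inv_eq_one, mul_inv_eq_iff_eq_mul] at h
  exact h

/- w-form move lemmas for z-powers -/
lemma mzx (c a : ℤ) (w : Γ k l) :
    zΓ k l ^ c * (xΓ k l ^ a * w) = xΓ k l ^ a * (zΓ k l ^ c * w) := by
  rw [← mul_assoc, ((c_xz k l).symm.zpow_zpow c a).eq, mul_assoc]

lemma mzy (c b : ℤ) (w : Γ k l) :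
    zΓ k l ^ c * (yΓ k l ^ b * w) = yΓ k l ^ b * (zΓ k l ^ c * w) := by
  rw [← mul_assoc, ((c_yz k l).symm.zpow_zpow c b).eq, mul_assoc]

lemma mzt (c d : ℤ) (w : Γ k l) :
    zΓ k l ^ c * (tΓ k l ^ d * w) = tΓ k l ^ d * (zΓ k l ^ c * w) := by
  rw [← mul_assoc, ((c_tz k l).symm.zpow_zpow c d).eq, mul_assoc]

lemma mzy1 (c : ℤ) (w : Γ k l) :
    zΓ k l ^ c * (yΓ k l * w) = yΓ k l * (zΓ k l ^ c * w) := by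
  rw [← mul_assoc, (((c_yz k l).symm.zpow_left c).eq), mul_assoc]

lemma mzy1' (c : ℤ) (w : Γ k l) :
    zΓ k l ^ c * ((yΓ k l)⁻¹ * w) = (yΓ k l)⁻¹ * (zΓ k l ^ c * w) := by
  rw [← mul_assoc, (((c_yz k l).symm.zpow_left c).inv_right.eq), mul_assoc]

lemma mzx1 (c : ℤ) (w : Γ k l) :
    zΓ k l ^ c * (xΓ k l * w) = xΓ k l * (zΓ k l ^ c * w) := by
  rw [← mul_assoc, (((c_xz k l).symm.zpow_left c).eq), mul_assoc]

lemma mzx1' (c : ℤ) (w : Γ k l) :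
    zΓ k l ^ c * ((xΓ k l)⁻¹ * w) = (xΓ k l)⁻¹ * (zΓ k l ^ c * w) := by
  rw [← mul_assoc, (((c_xz k l).symm.zpow_left c).inv_right.eq), mul_assoc]

lemma mtx (d a : ℤ) (w : Γ k l) :
    tΓ k l ^ d * (xΓ k l ^ a * w) = xΓ k l ^ a * (tΓ k l ^ d * w) := by
  rw [← mul_assoc, ((c_tx k l).zpow_zpow d a).eq, mul_assoc]

lemma mtz (d c : ℤ) (w : Γ k l) :
    tΓ k l ^ d * (zΓ k l ^ c * w) = zΓ k l ^ c * (tΓ k l ^ d * w) := by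
  rw [← mul_assoc, ((c_tz k l).zpow_zpow d c).eq, mul_assoc]

lemma mtx1 (a : ℤ) (w : Γ k l) :
    tΓ k l * (xΓ k l ^ a * w) = xΓ k l ^ a * (tΓ k l * w) := by
  rw [← mul_assoc, ((c_tx k l).zpow_right a).eq, mul_assoc]

lemma mtx1' (a : ℤ) (w : Γ k l) :
    (tΓ k l)⁻¹ * (xΓ k l ^ a * w) = xΓ k l ^ a * ((tΓ k l)⁻¹ * w) := by
  rw [← mul_assoc, ((c_tx k l).zpow_right a).inv_left.eq, mul_assoc]

lemma mtz1 (c : ℤ) (w : Γ k l) :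
    tΓ k l * (zΓ k l ^ c * w) = zΓ k l ^ c * (tΓ k l * w) := by
  rw [← mul_assoc, ((c_tz k l).zpow_right c).eq, mul_assoc]

lemma mtz1' (c : ℤ) (w : Γ k l) :
    (tΓ k l)⁻¹ * (zΓ k l ^ c * w) = zΓ k l ^ c * ((tΓ k l)⁻¹ * w) := by
  rw [← mul_assoc, ((c_tz k l).zpow_right c).inv_left.eq, mul_assoc]


/- plain base relations -/
lemma hxy : xΓ k l * yΓ k l = zΓ k l * (yΓ k l * xΓ k l) := by
  have h := rel_xy k l
  rw [← h]; group

lemma relA : yΓ k l * xΓ k l = xΓ k l * (yΓ k l * zΓ k l ^ (-1 : ℤ)) := by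
  have h1 : yΓ k l * xΓ k l = (zΓ k l)⁻¹ * (xΓ k l * yΓ k l) := by
    rw [hxy]; group
  have c : Commute ((zΓ k l)⁻¹) (xΓ k l * yΓ k l) :=
    (((c_xz k l).symm).mul_right ((c_yz k l).symm)).inv_left
  rw [h1, c.eq, zpow_neg_one]; group

lemma relB : yΓ k l * (xΓ k l)⁻¹ = (xΓ k l)⁻¹ * (yΓ k l * zΓ k l ^ (1 : ℤ)) := by
  have key : (xΓ k l)⁻¹ * (yΓ k l * zΓ k l ^ (1 : ℤ)) * xΓ k l = yΓ k l := by
    rw [zpow_one]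
    have e1 : (xΓ k l)⁻¹ * (yΓ k l * zΓ k l) * xΓ k l
        = (xΓ k l)⁻¹ * (yΓ k l * (zΓ k l * xΓ k l)) := by group
    rw [e1, ((c_xz k l).symm).eq]
    have e2 : (xΓ k l)⁻¹ * (yΓ k l * (xΓ k l * zΓ k l))
        = (xΓ k l)⁻¹ * ((yΓ k l * xΓ k l) * zΓ k l) := by group
    rw [e2, relA k l]; group
  calc yΓ k l * (xΓ k l)⁻¹ = ((xΓ k l)⁻¹ * (yΓ k l * zΓ k l ^ (1:ℤ)) * xΓ k l) * (xΓ k l)⁻¹ := by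
        rw [key]
    _ = (xΓ k l)⁻¹ * (yΓ k l * zΓ k l ^ (1 : ℤ)) := by group

lemma relC : (yΓ k l)⁻¹ * xΓ k l = xΓ k l * ((yΓ k l)⁻¹ * zΓ k l ^ (1 : ℤ)) := by
  have key : yΓ k l * (xΓ k l * ((yΓ k l)⁻¹ * zΓ k l ^ (1 : ℤ))) = xΓ k l := by
    rw [zpow_one]
    have e1 : yΓ k l * (xΓ k l * ((yΓ k l)⁻¹ * zΓ k l))
        = (yΓ k l * xΓ k l) * ((yΓ k l)⁻¹ * zΓ k l) := by group
    rw [e1, relA k l, zpow_neg_one]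
    have e2 : xΓ k l * (yΓ k l * (zΓ k l)⁻¹) * ((yΓ k l)⁻¹ * zΓ k l)
        = xΓ k l * (yΓ k l * ((zΓ k l)⁻¹ * (yΓ k l)⁻¹) * zΓ k l) := by group
    rw [e2, (((c_yz k l).symm).inv_left.inv_right).eq]; group
  calc (yΓ k l)⁻¹ * xΓ k l
      = (yΓ k l)⁻¹ * (yΓ k l * (xΓ k l * ((yΓ k l)⁻¹ * zΓ k l ^ (1:ℤ)))) := by rw [key]
    _ = xΓ k l * ((yΓ k l)⁻¹ * zΓ k l ^ (1 : ℤ)) := by group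

lemma relD : (yΓ k l)⁻¹ * (xΓ k l)⁻¹ = (xΓ k l)⁻¹ * ((yΓ k l)⁻¹ * zΓ k l ^ (-1 : ℤ)) := by
  have key : yΓ k l * ((xΓ k l)⁻¹ * ((yΓ k l)⁻¹ * zΓ k l ^ (-1 : ℤ))) = (xΓ k l)⁻¹ := by
    rw [zpow_neg_one]
    have e1 : yΓ k l * ((xΓ k l)⁻¹ * ((yΓ k l)⁻¹ * (zΓ k l)⁻¹))
        = (yΓ k l * (xΓ k l)⁻¹) * ((yΓ k l)⁻¹ * (zΓ k l)⁻¹) := by group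
    rw [e1, relB k l, zpow_one]
    have e2 : (xΓ k l)⁻¹ * (yΓ k l * zΓ k l) * ((yΓ k l)⁻¹ * (zΓ k l)⁻¹)
        = (xΓ k l)⁻¹ * (yΓ k l * (zΓ k l * (yΓ k l)⁻¹) * (zΓ k l)⁻¹) := by group
    rw [e2, (((c_yz k l).symm).inv_right).eq]; group
  calc (yΓ k l)⁻¹ * (xΓ k l)⁻¹
      = (yΓ k l)⁻¹ * (yΓ k l * ((xΓ k l)⁻¹ * ((yΓ k l)⁻¹ * zΓ k l ^ (-1:ℤ)))) := by rw [key]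
    _ = (xΓ k l)⁻¹ * ((yΓ k l)⁻¹ * zΓ k l ^ (-1 : ℤ)) := by group

/- w-forms of the base relations -/
lemma b_yxw (w : Γ k l) :
    yΓ k l * (xΓ k l * w) = xΓ k l * (yΓ k l * (zΓ k l ^ (-1 : ℤ) * w)) := by
  rw [← mul_assoc, relA]; group

lemma b_yxinvw (w : Γ k l) :
    yΓ k l * ((xΓ k l)⁻¹ * w) = (xΓ k l)⁻¹ * (yΓ k l * (zΓ k l ^ (1 : ℤ) * w)) := by
  rw [← mul_assoc, relB]; group

lemma b_yinvxw (w : Γ k l) :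
    (yΓ k l)⁻¹ * (xΓ k l * w) = xΓ k l * ((yΓ k l)⁻¹ * (zΓ k l ^ (1 : ℤ) * w)) := by
  rw [← mul_assoc, relC]; group

lemma b_yinvxinvw (w : Γ k l) :
    (yΓ k l)⁻¹ * ((xΓ k l)⁻¹ * w) = (xΓ k l)⁻¹ * ((yΓ k l)⁻¹ * (zΓ k l ^ (-1 : ℤ) * w)) := by
  rw [← mul_assoc, relD]; group

/- moving a single y (or y⁻¹) past x-powers -/
lemma u1 (a : ℤ) : ∀ w : Γ k l,
    yΓ k l * (xΓ k l ^ a * w) = xΓ k l ^ a * (yΓ k l * (zΓ k l ^ (-a) * w)) := by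
  induction a using Int.induction_on with
  | zero => intro w; simp
  | succ i ih =>
      intro w
      rw [zpow_add_one]
      calc yΓ k l * (xΓ k l ^ (i:ℤ) * xΓ k l * w)
          = yΓ k l * (xΓ k l ^ (i:ℤ) * (xΓ k l * w)) := by group
        _ = xΓ k l ^ (i:ℤ) * (yΓ k l * (zΓ k l ^ (-i:ℤ) * (xΓ k l * w))) := by rw [ih]
        _ = xΓ k l ^ (i:ℤ) * (yΓ k l * (xΓ k l * (zΓ k l ^ (-i:ℤ) * w))) := by rw [mzx1]
        _ = xΓ k l ^ (i:ℤ) * (xΓ k l * (yΓ k l * (zΓ k l ^ (-1:ℤ) * (zΓ k l ^ (-i:ℤ) * w)))) := by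
            rw [b_yxw]
        _ = xΓ k l ^ (i:ℤ) * xΓ k l * (yΓ k l * (zΓ k l ^ (-((i:ℤ)+1)) * w)) := by group
  | pred i ih =>
      intro w
      rw [zpow_sub_one]
      calc yΓ k l * (xΓ k l ^ (-i:ℤ) * (xΓ k l)⁻¹ * w)
          = yΓ k l * (xΓ k l ^ (-i:ℤ) * ((xΓ k l)⁻¹ * w)) := by group
        _ = xΓ k l ^ (-i:ℤ) * (yΓ k l * (zΓ k l ^ (-(-i:ℤ)) * ((xΓ k l)⁻¹ * w))) := by rw [ih]
        _ = xΓ k l ^ (-i:ℤ) * (yΓ k l * ((xΓ k l)⁻¹ * (zΓ k l ^ (-(-i:ℤ)) * w))) := by rw [mzx1']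
        _ = xΓ k l ^ (-i:ℤ) * ((xΓ k l)⁻¹ * (yΓ k l * (zΓ k l ^ (1:ℤ) * (zΓ k l ^ (-(-i:ℤ)) * w)))) := by
            rw [b_yxinvw]
        _ = xΓ k l ^ (-i:ℤ) * (xΓ k l)⁻¹ * (yΓ k l * (zΓ k l ^ (-(-(i:ℤ)-1)) * w)) := by group

lemma u2 (a : ℤ) : ∀ w : Γ k l,
    (yΓ k l)⁻¹ * (xΓ k l ^ a * w) = xΓ k l ^ a * ((yΓ k l)⁻¹ * (zΓ k l ^ a * w)) := by
  induction a using Int.induction_on with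
  | zero => intro w; simp
  | succ i ih =>
      intro w
      rw [zpow_add_one]
      calc (yΓ k l)⁻¹ * (xΓ k l ^ (i:ℤ) * xΓ k l * w)
          = (yΓ k l)⁻¹ * (xΓ k l ^ (i:ℤ) * (xΓ k l * w)) := by group
        _ = xΓ k l ^ (i:ℤ) * ((yΓ k l)⁻¹ * (zΓ k l ^ (i:ℤ) * (xΓ k l * w))) := by rw [ih]
        _ = xΓ k l ^ (i:ℤ) * ((yΓ k l)⁻¹ * (xΓ k l * (zΓ k l ^ (i:ℤ) * w))) := by rw [mzx1]
        _ = xΓ k l ^ (i:ℤ) * (xΓ k l * ((yΓ k l)⁻¹ * (zΓ k l ^ (1:ℤ) * (zΓ k l ^ (i:ℤ) * w)))) := by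
            rw [b_yinvxw]
        _ = xΓ k l ^ (i:ℤ) * xΓ k l * ((yΓ k l)⁻¹ * (zΓ k l ^ ((i:ℤ)+1) * w)) := by group
  | pred i ih =>
      intro w
      rw [zpow_sub_one]
      calc (yΓ k l)⁻¹ * (xΓ k l ^ (-i:ℤ) * (xΓ k l)⁻¹ * w)
          = (yΓ k l)⁻¹ * (xΓ k l ^ (-i:ℤ) * ((xΓ k l)⁻¹ * w)) := by group
        _ = xΓ k l ^ (-i:ℤ) * ((yΓ k l)⁻¹ * (zΓ k l ^ (-i:ℤ) * ((xΓ k l)⁻¹ * w))) := by rw [ih]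
        _ = xΓ k l ^ (-i:ℤ) * ((yΓ k l)⁻¹ * ((xΓ k l)⁻¹ * (zΓ k l ^ (-i:ℤ) * w))) := by rw [mzx1']
        _ = xΓ k l ^ (-i:ℤ) * ((xΓ k l)⁻¹ * ((yΓ k l)⁻¹ * (zΓ k l ^ (-1:ℤ) * (zΓ k l ^ (-i:ℤ) * w)))) := by
            rw [b_yinvxinvw]
        _ = xΓ k l ^ (-i:ℤ) * (xΓ k l)⁻¹ * ((yΓ k l)⁻¹ * (zΓ k l ^ (-(i:ℤ)-1) * w)) := by group

/- moving y-powers past x-powers -/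
lemma mvyx (b a : ℤ) : ∀ w : Γ k l,
    yΓ k l ^ b * (xΓ k l ^ a * w) = xΓ k l ^ a * (yΓ k l ^ b * (zΓ k l ^ (-(a*b)) * w)) := by
  induction b using Int.induction_on with
  | zero => intro w; simp
  | succ i ih =>
      intro w
      rw [zpow_add_one]
      calc yΓ k l ^ (i:ℤ) * yΓ k l * (xΓ k l ^ a * w)
          = yΓ k l ^ (i:ℤ) * (yΓ k l * (xΓ k l ^ a * w)) := by group
        _ = yΓ k l ^ (i:ℤ) * (xΓ k l ^ a * (yΓ k l * (zΓ k l ^ (-a) * w))) := by rw [u1]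
        _ = xΓ k l ^ a * (yΓ k l ^ (i:ℤ) * (zΓ k l ^ (-(a*i)) * (yΓ k l * (zΓ k l ^ (-a) * w)))) := by
            rw [ih]
        _ = xΓ k l ^ a * (yΓ k l ^ (i:ℤ) * (yΓ k l * (zΓ k l ^ (-(a*i)) * (zΓ k l ^ (-a) * w)))) := by
            rw [mzy1]
        _ = xΓ k l ^ a * (yΓ k l ^ (i:ℤ) * yΓ k l * (zΓ k l ^ (-(a*((i:ℤ)+1))) * w)) := by group
  | pred i ih =>
      intro w
      rw [zpow_sub_one]
      calc yΓ k l ^ (-i:ℤ) * (yΓ k l)⁻¹ * (xΓ k l ^ a * w)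
          = yΓ k l ^ (-i:ℤ) * ((yΓ k l)⁻¹ * (xΓ k l ^ a * w)) := by group
        _ = yΓ k l ^ (-i:ℤ) * (xΓ k l ^ a * ((yΓ k l)⁻¹ * (zΓ k l ^ a * w))) := by rw [u2]
        _ = xΓ k l ^ a * (yΓ k l ^ (-i:ℤ) * (zΓ k l ^ (-(a*(-i:ℤ))) * ((yΓ k l)⁻¹ * (zΓ k l ^ a * w)))) := by
            rw [ih]
        _ = xΓ k l ^ a * (yΓ k l ^ (-i:ℤ) * ((yΓ k l)⁻¹ * (zΓ k l ^ (-(a*(-i:ℤ))) * (zΓ k l ^ a * w)))) := by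
            rw [mzy1']
        _ = xΓ k l ^ (a:ℤ) * (yΓ k l ^ (-i:ℤ) * (yΓ k l)⁻¹ * (zΓ k l ^ (-(a*(-(i:ℤ)-1))) * w)) := by group
/- T function -/
def T (b : ℤ) : ℤ := b * (b - 1) / 2
lemma two_T (b : ℤ) : 2 * T b = b * (b - 1) := by
  unfold T
  rcases Int.even_or_odd b with ⟨m, hm⟩ | ⟨m, hm⟩
  · have h : b * (b - 1) = 2 * (m * (b - 1)) := by rw [hm]; ring
    rw [h, Int.mul_ediv_cancel_left _ (by norm_num)]
  · have h : b * (b - 1) = 2 * (b * m) := by rw [hm]; ring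
    rw [h, Int.mul_ediv_cancel_left _ (by norm_num)]
lemma T_add (b c : ℤ) : T (b + c) = T b + T c + b * c := by
  have h1 := two_T (b + c); have h2 := two_T b; have h3 := two_T c; nlinarith [h1, h2, h3]
lemma T_one : T 1 = 0 := rfl
lemma T_zero : T 0 = 0 := rfl
lemma T_negone : T (-1 : ℤ) = 1 := rfl
lemma T_neg (b : ℤ) : T (-b) = T b + b := by
  have h1 := two_T (-b); have h2 := two_T b; nlinarith [h1, h2]

/- t-conjugation of y -/
lemma b_ty : tΓ k l * yΓ k l = xΓ k l ^ k * (yΓ k l * (zΓ k l ^ l * tΓ k l)) := by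
  calc tΓ k l * yΓ k l = (tΓ k l * yΓ k l * (tΓ k l)⁻¹) * tΓ k l := by group
    _ = xΓ k l ^ k * yΓ k l * zΓ k l ^ l * tΓ k l := by rw [rel_ty]
    _ = xΓ k l ^ k * (yΓ k l * (zΓ k l ^ l * tΓ k l)) := by group

lemma b_tyw (w : Γ k l) :
    tΓ k l * (yΓ k l * w) = xΓ k l ^ k * (yΓ k l * (zΓ k l ^ l * (tΓ k l * w))) := by
  rw [← mul_assoc, b_ty]; group

lemma b_tyinv : tΓ k l * (yΓ k l)⁻¹
    = xΓ k l ^ (-k) * ((yΓ k l)⁻¹ * (zΓ k l ^ (-l - k) * tΓ k l)) := by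
  calc tΓ k l * (yΓ k l)⁻¹
      = (tΓ k l * yΓ k l * (tΓ k l)⁻¹)⁻¹ * tΓ k l := by group
    _ = (xΓ k l ^ k * yΓ k l * zΓ k l ^ l)⁻¹ * tΓ k l := by rw [rel_ty]
    _ = zΓ k l ^ (-l) * ((yΓ k l)⁻¹ * (xΓ k l ^ (-k) * tΓ k l)) := by group
    _ = zΓ k l ^ (-l) * (xΓ k l ^ (-k) * ((yΓ k l)⁻¹ * (zΓ k l ^ (-k) * tΓ k l))) := by rw [u2]
    _ = xΓ k l ^ (-k) * (zΓ k l ^ (-l) * ((yΓ k l)⁻¹ * (zΓ k l ^ (-k) * tΓ k l))) := by rw [mzx]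
    _ = xΓ k l ^ (-k) * ((yΓ k l)⁻¹ * (zΓ k l ^ (-l) * (zΓ k l ^ (-k) * tΓ k l))) := by rw [mzy1']
    _ = xΓ k l ^ (-k) * ((yΓ k l)⁻¹ * (zΓ k l ^ (-l - k) * tΓ k l)) := by group

lemma b_tyinvw (w : Γ k l) :
    tΓ k l * ((yΓ k l)⁻¹ * w)
      = xΓ k l ^ (-k) * ((yΓ k l)⁻¹ * (zΓ k l ^ (-l - k) * (tΓ k l * w))) := by
  rw [← mul_assoc, b_tyinv]; group

lemma key_tinv : tΓ k l * (xΓ k l ^ (-k) * (yΓ k l * (zΓ k l ^ (-l) * (tΓ k l)⁻¹))) = yΓ k l := by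
  calc tΓ k l * (xΓ k l ^ (-k) * (yΓ k l * (zΓ k l ^ (-l) * (tΓ k l)⁻¹)))
      = xΓ k l ^ (-k) * (tΓ k l * (yΓ k l * (zΓ k l ^ (-l) * (tΓ k l)⁻¹))) := by rw [mtx1]
    _ = xΓ k l ^ (-k) * (xΓ k l ^ k * (yΓ k l * (zΓ k l ^ l * (tΓ k l * (zΓ k l ^ (-l) * (tΓ k l)⁻¹))))) := by
        rw [b_tyw]
    _ = xΓ k l ^ (-k) * (xΓ k l ^ k * (yΓ k l * (zΓ k l ^ l * (zΓ k l ^ (-l) * (tΓ k l * (tΓ k l)⁻¹))))) := by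
        rw [mtz1]
    _ = yΓ k l := by group

lemma b_tinvy : (tΓ k l)⁻¹ * yΓ k l
    = xΓ k l ^ (-k) * (yΓ k l * (zΓ k l ^ (-l) * (tΓ k l)⁻¹)) := by
  conv_lhs => rw [← key_tinv k l]
  group

lemma b_tinvyw (w : Γ k l) :
    (tΓ k l)⁻¹ * (yΓ k l * w)
      = xΓ k l ^ (-k) * (yΓ k l * (zΓ k l ^ (-l) * ((tΓ k l)⁻¹ * w))) := by
  rw [← mul_assoc, b_tinvy]; group

lemma conj_tinv_y : (tΓ k l)⁻¹ * yΓ k l * tΓ k l = xΓ k l ^ (-k) * yΓ k l * zΓ k l ^ (-l) := by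
  rw [b_tinvy]; group

lemma b_tinvyinv : (tΓ k l)⁻¹ * (yΓ k l)⁻¹
    = xΓ k l ^ k * ((yΓ k l)⁻¹ * (zΓ k l ^ (l + k) * (tΓ k l)⁻¹)) := by
  calc (tΓ k l)⁻¹ * (yΓ k l)⁻¹
      = ((tΓ k l)⁻¹ * yΓ k l * tΓ k l)⁻¹ * (tΓ k l)⁻¹ := by group
    _ = (xΓ k l ^ (-k) * yΓ k l * zΓ k l ^ (-l))⁻¹ * (tΓ k l)⁻¹ := by rw [conj_tinv_y]
    _ = zΓ k l ^ l * ((yΓ k l)⁻¹ * (xΓ k l ^ k * (tΓ k l)⁻¹)) := by group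
    _ = zΓ k l ^ l * (xΓ k l ^ k * ((yΓ k l)⁻¹ * (zΓ k l ^ k * (tΓ k l)⁻¹))) := by rw [u2]
    _ = xΓ k l ^ k * (zΓ k l ^ l * ((yΓ k l)⁻¹ * (zΓ k l ^ k * (tΓ k l)⁻¹))) := by rw [mzx]
    _ = xΓ k l ^ k * ((yΓ k l)⁻¹ * (zΓ k l ^ l * (zΓ k l ^ k * (tΓ k l)⁻¹))) := by rw [mzy1']
    _ = xΓ k l ^ k * ((yΓ k l)⁻¹ * (zΓ k l ^ (l + k) * (tΓ k l)⁻¹)) := by group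

lemma b_tinvyinvw (w : Γ k l) :
    (tΓ k l)⁻¹ * ((yΓ k l)⁻¹ * w)
      = xΓ k l ^ k * ((yΓ k l)⁻¹ * (zΓ k l ^ (l + k) * ((tΓ k l)⁻¹ * w))) := by
  rw [← mul_assoc, b_tinvyinv]; group

/- conjugation of y-powers by t -/
lemma L7 (b : ℤ) : ∀ w : Γ k l,
    tΓ k l * (yΓ k l ^ b * w)
      = xΓ k l ^ (k * b) * (yΓ k l ^ b * (zΓ k l ^ (l * b - k * T b) * (tΓ k l * w))) := by
  induction b using Int.induction_on with
  | zero => intro w; simp [T_zero]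
  | succ i ih =>
      intro w
      rw [zpow_add_one, show T ((i:ℤ)+1) = T i + T 1 + i * 1 from T_add i 1, T_one]
      calc tΓ k l * (yΓ k l ^ (i:ℤ) * yΓ k l * w)
          = tΓ k l * (yΓ k l ^ (i:ℤ) * (yΓ k l * w)) := by group
        _ = xΓ k l ^ (k*(i:ℤ)) * (yΓ k l ^ (i:ℤ) * (zΓ k l ^ (l*(i:ℤ) - k*T i) * (tΓ k l * (yΓ k l * w)))) := by
            rw [ih]
        _ = xΓ k l ^ (k*(i:ℤ)) * (yΓ k l ^ (i:ℤ) * (zΓ k l ^ (l*(i:ℤ) - k*T i) * (xΓ k l ^ k * (yΓ k l * (zΓ k l ^ l * (tΓ k l * w)))))) := by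
            rw [b_tyw]
        _ = xΓ k l ^ (k*(i:ℤ)) * (yΓ k l ^ (i:ℤ) * (xΓ k l ^ k * (zΓ k l ^ (l*(i:ℤ) - k*T i) * (yΓ k l * (zΓ k l ^ l * (tΓ k l * w)))))) := by
            rw [mzx]
        _ = xΓ k l ^ (k*(i:ℤ)) * (xΓ k l ^ k * (yΓ k l ^ (i:ℤ) * (zΓ k l ^ (-(k*(i:ℤ))) * (zΓ k l ^ (l*(i:ℤ) - k*T i) * (yΓ k l * (zΓ k l ^ l * (tΓ k l * w))))))) := by
            rw [mvyx]
        _ = xΓ k l ^ (k*(i:ℤ)) * (xΓ k l ^ k * (yΓ k l ^ (i:ℤ) * (zΓ k l ^ (-(k*(i:ℤ))) * (yΓ k l * (zΓ k l ^ (l*(i:ℤ) - k*T i) * (zΓ k l ^ l * (tΓ k l * w))))))) := by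
            rw [mzy1]
        _ = xΓ k l ^ (k*(i:ℤ)) * (xΓ k l ^ k * (yΓ k l ^ (i:ℤ) * (yΓ k l * (zΓ k l ^ (-(k*(i:ℤ))) * (zΓ k l ^ (l*(i:ℤ) - k*T i) * (zΓ k l ^ l * (tΓ k l * w))))))) := by
            rw [mzy1]
        _ = xΓ k l ^ (k*((i:ℤ)+1)) * (yΓ k l ^ (i:ℤ) * yΓ k l * (zΓ k l ^ (l*((i:ℤ)+1) - k*(T i + 0 + (i:ℤ)*1)) * (tΓ k l * w))) := by
            group
  | pred i ih =>
      intro w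
      rw [zpow_sub_one, show T (-(i:ℤ)-1) = T (-(i:ℤ)) + T (-1) + (-(i:ℤ)) * (-1) from T_add (-(i:ℤ)) (-1), T_negone]
      calc tΓ k l * (yΓ k l ^ (-(i:ℤ)) * (yΓ k l)⁻¹ * w)
          = tΓ k l * (yΓ k l ^ (-(i:ℤ)) * ((yΓ k l)⁻¹ * w)) := by group
        _ = xΓ k l ^ (k*(-(i:ℤ))) * (yΓ k l ^ (-(i:ℤ)) * (zΓ k l ^ (l*(-(i:ℤ)) - k*T (-(i:ℤ))) * (tΓ k l * ((yΓ k l)⁻¹ * w)))) := by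
            rw [ih]
        _ = xΓ k l ^ (k*(-(i:ℤ))) * (yΓ k l ^ (-(i:ℤ)) * (zΓ k l ^ (l*(-(i:ℤ)) - k*T (-(i:ℤ))) * (xΓ k l ^ (-k) * ((yΓ k l)⁻¹ * (zΓ k l ^ (-l-k) * (tΓ k l * w)))))) := by
            rw [b_tyinvw]
        _ = xΓ k l ^ (k*(-(i:ℤ))) * (yΓ k l ^ (-(i:ℤ)) * (xΓ k l ^ (-k) * (zΓ k l ^ (l*(-(i:ℤ)) - k*T (-(i:ℤ))) * ((yΓ k l)⁻¹ * (zΓ k l ^ (-l-k) * (tΓ k l * w)))))) := by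
            rw [mzx]
        _ = xΓ k l ^ (k*(-(i:ℤ))) * (xΓ k l ^ (-k) * (yΓ k l ^ (-(i:ℤ)) * (zΓ k l ^ (-((-k)*(-(i:ℤ)))) * (zΓ k l ^ (l*(-(i:ℤ)) - k*T (-(i:ℤ))) * ((yΓ k l)⁻¹ * (zΓ k l ^ (-l-k) * (tΓ k l * w))))))) := by
            rw [mvyx]
        _ = xΓ k l ^ (k*(-(i:ℤ))) * (xΓ k l ^ (-k) * (yΓ k l ^ (-(i:ℤ)) * (zΓ k l ^ (-((-k)*(-(i:ℤ)))) * ((yΓ k l)⁻¹ * (zΓ k l ^ (l*(-(i:ℤ)) - k*T (-(i:ℤ))) * (zΓ k l ^ (-l-k) * (tΓ k l * w))))))) := by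
            rw [mzy1']
        _ = xΓ k l ^ (k*(-(i:ℤ))) * (xΓ k l ^ (-k) * (yΓ k l ^ (-(i:ℤ)) * ((yΓ k l)⁻¹ * (zΓ k l ^ (-((-k)*(-(i:ℤ)))) * (zΓ k l ^ (l*(-(i:ℤ)) - k*T (-(i:ℤ))) * (zΓ k l ^ (-l-k) * (tΓ k l * w))))))) := by
            rw [mzy1']
        _ = xΓ k l ^ (k*(-(i:ℤ)-1)) * (yΓ k l ^ (-(i:ℤ)) * (yΓ k l)⁻¹ * (zΓ k l ^ (l*(-(i:ℤ)-1) - k*(T (-(i:ℤ)) + 1 + -(i:ℤ) * -1)) * (tΓ k l * w))) := by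
            group

lemma L7inv (b : ℤ) : ∀ w : Γ k l,
    (tΓ k l)⁻¹ * (yΓ k l ^ b * w)
      = xΓ k l ^ (-(k * b)) * (yΓ k l ^ b * (zΓ k l ^ (-(l * b) + k * T b) * ((tΓ k l)⁻¹ * w))) := by
  induction b using Int.induction_on with
  | zero => intro w; simp [T_zero]
  | succ i ih =>
      intro w
      rw [zpow_add_one, show T ((i:ℤ)+1) = T i + T 1 + i * 1 from T_add i 1, T_one]
      calc (tΓ k l)⁻¹ * (yΓ k l ^ (i:ℤ) * yΓ k l * w)
          = (tΓ k l)⁻¹ * (yΓ k l ^ (i:ℤ) * (yΓ k l * w)) := by group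
        _ = xΓ k l ^ (-(k*(i:ℤ))) * (yΓ k l ^ (i:ℤ) * (zΓ k l ^ (-(l*(i:ℤ)) + k*T i) * ((tΓ k l)⁻¹ * (yΓ k l * w)))) := by
            rw [ih]
        _ = xΓ k l ^ (-(k*(i:ℤ))) * (yΓ k l ^ (i:ℤ) * (zΓ k l ^ (-(l*(i:ℤ)) + k*T i) * (xΓ k l ^ (-k) * (yΓ k l * (zΓ k l ^ (-l) * ((tΓ k l)⁻¹ * w)))))) := by
            rw [b_tinvyw]
        _ = xΓ k l ^ (-(k*(i:ℤ))) * (yΓ k l ^ (i:ℤ) * (xΓ k l ^ (-k) * (zΓ k l ^ (-(l*(i:ℤ)) + k*T i) * (yΓ k l * (zΓ k l ^ (-l) * ((tΓ k l)⁻¹ * w)))))) := by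
            rw [mzx]
        _ = xΓ k l ^ (-(k*(i:ℤ))) * (xΓ k l ^ (-k) * (yΓ k l ^ (i:ℤ) * (zΓ k l ^ (-((-k)*(i:ℤ))) * (zΓ k l ^ (-(l*(i:ℤ)) + k*T i) * (yΓ k l * (zΓ k l ^ (-l) * ((tΓ k l)⁻¹ * w))))))) := by
            rw [mvyx]
        _ = xΓ k l ^ (-(k*(i:ℤ))) * (xΓ k l ^ (-k) * (yΓ k l ^ (i:ℤ) * (zΓ k l ^ (-((-k)*(i:ℤ))) * (yΓ k l * (zΓ k l ^ (-(l*(i:ℤ)) + k*T i) * (zΓ k l ^ (-l) * ((tΓ k l)⁻¹ * w))))))) := by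
            rw [mzy1]
        _ = xΓ k l ^ (-(k*(i:ℤ))) * (xΓ k l ^ (-k) * (yΓ k l ^ (i:ℤ) * (yΓ k l * (zΓ k l ^ (-((-k)*(i:ℤ))) * (zΓ k l ^ (-(l*(i:ℤ)) + k*T i) * (zΓ k l ^ (-l) * ((tΓ k l)⁻¹ * w))))))) := by
            rw [mzy1]
        _ = xΓ k l ^ (-(k*((i:ℤ)+1))) * (yΓ k l ^ (i:ℤ) * yΓ k l * (zΓ k l ^ (-(l*((i:ℤ)+1)) + k*(T i + 0 + (i:ℤ)*1)) * ((tΓ k l)⁻¹ * w))) := by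
            group
  | pred i ih =>
      intro w
      rw [zpow_sub_one, show T (-(i:ℤ)-1) = T (-(i:ℤ)) + T (-1) + (-(i:ℤ)) * (-1) from T_add (-(i:ℤ)) (-1), T_negone]
      calc (tΓ k l)⁻¹ * (yΓ k l ^ (-(i:ℤ)) * (yΓ k l)⁻¹ * w)
          = (tΓ k l)⁻¹ * (yΓ k l ^ (-(i:ℤ)) * ((yΓ k l)⁻¹ * w)) := by group
        _ = xΓ k l ^ (-(k*(-(i:ℤ)))) * (yΓ k l ^ (-(i:ℤ)) * (zΓ k l ^ (-(l*(-(i:ℤ))) + k*T (-(i:ℤ))) * ((tΓ k l)⁻¹ * ((yΓ k l)⁻¹ * w)))) := by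
            rw [ih]
        _ = xΓ k l ^ (-(k*(-(i:ℤ)))) * (yΓ k l ^ (-(i:ℤ)) * (zΓ k l ^ (-(l*(-(i:ℤ))) + k*T (-(i:ℤ))) * (xΓ k l ^ k * ((yΓ k l)⁻¹ * (zΓ k l ^ (l+k) * ((tΓ k l)⁻¹ * w)))))) := by
            rw [b_tinvyinvw]
        _ = xΓ k l ^ (-(k*(-(i:ℤ)))) * (yΓ k l ^ (-(i:ℤ)) * (xΓ k l ^ k * (zΓ k l ^ (-(l*(-(i:ℤ))) + k*T (-(i:ℤ))) * ((yΓ k l)⁻¹ * (zΓ k l ^ (l+k) * ((tΓ k l)⁻¹ * w)))))) := by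
            rw [mzx]
        _ = xΓ k l ^ (-(k*(-(i:ℤ)))) * (xΓ k l ^ k * (yΓ k l ^ (-(i:ℤ)) * (zΓ k l ^ (-(k*(-(i:ℤ)))) * (zΓ k l ^ (-(l*(-(i:ℤ))) + k*T (-(i:ℤ))) * ((yΓ k l)⁻¹ * (zΓ k l ^ (l+k) * ((tΓ k l)⁻¹ * w))))))) := by
            rw [mvyx]
        _ = xΓ k l ^ (-(k*(-(i:ℤ)))) * (xΓ k l ^ k * (yΓ k l ^ (-(i:ℤ)) * (zΓ k l ^ (-(k*(-(i:ℤ)))) * ((yΓ k l)⁻¹ * (zΓ k l ^ (-(l*(-(i:ℤ))) + k*T (-(i:ℤ))) * (zΓ k l ^ (l+k) * ((tΓ k l)⁻¹ * w))))))) := by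
            rw [mzy1']
        _ = xΓ k l ^ (-(k*(-(i:ℤ)))) * (xΓ k l ^ k * (yΓ k l ^ (-(i:ℤ)) * ((yΓ k l)⁻¹ * (zΓ k l ^ (-(k*(-(i:ℤ)))) * (zΓ k l ^ (-(l*(-(i:ℤ))) + k*T (-(i:ℤ))) * (zΓ k l ^ (l+k) * ((tΓ k l)⁻¹ * w))))))) := by
            rw [mzy1']
        _ = xΓ k l ^ (-(k*(-(i:ℤ)-1))) * (yΓ k l ^ (-(i:ℤ)) * (yΓ k l)⁻¹ * (zΓ k l ^ (-(l*(-(i:ℤ)-1)) + k*(T (-(i:ℤ)) + 1 + -(i:ℤ) * -1)) * ((tΓ k l)⁻¹ * w))) := by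
            group

structure Nm (k l : ℤ) where
  a : ℤ
  b : ℤ
  c : ℤ
  d : ℤ
namespace Nm
variable {k l : ℤ}
@[ext] lemma ext' {p q : Nm k l} (ha : p.a = q.a) (hb : p.b = q.b) (hc : p.c = q.c)
    (hd : p.d = q.d) : p = q := by cases p; cases q; simp_all
instance : Mul (Nm k l) :=
  ⟨fun p q => ⟨p.a + q.a + k * p.d * q.b, p.b + q.b,
    p.c + q.c + l * p.d * q.b - k * p.d * T q.b - p.b * (q.a + k * p.d * q.b),
    p.d + q.d⟩⟩
instance : One (Nm k l) := ⟨⟨0, 0, 0, 0⟩⟩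
instance : Inv (Nm k l) :=
  ⟨fun p => ⟨-p.a + k * p.d * p.b, -p.b,
    -p.c + l * p.d * p.b + k * p.d * (T p.b + p.b) - p.a * p.b, -p.d⟩⟩
@[simp] lemma mul_a (p q : Nm k l) : (p * q).a = p.a + q.a + k * p.d * q.b := rfl
@[simp] lemma mul_b (p q : Nm k l) : (p * q).b = p.b + q.b := rfl
@[simp] lemma mul_c (p q : Nm k l) :
    (p * q).c = p.c + q.c + l * p.d * q.b - k * p.d * T q.b - p.b * (q.a + k * p.d * q.b) := rfl
@[simp] lemma mul_d (p q : Nm k l) : (p * q).d = p.d + q.d := rfl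
@[simp] lemma one_a : (1 : Nm k l).a = 0 := rfl
@[simp] lemma one_b : (1 : Nm k l).b = 0 := rfl
@[simp] lemma one_c : (1 : Nm k l).c = 0 := rfl
@[simp] lemma one_d : (1 : Nm k l).d = 0 := rfl
@[simp] lemma inv_a (p : Nm k l) : (p⁻¹).a = -p.a + k * p.d * p.b := rfl
@[simp] lemma inv_b (p : Nm k l) : (p⁻¹).b = -p.b := rfl
@[simp] lemma inv_c (p : Nm k l) :
    (p⁻¹).c = -p.c + l * p.d * p.b + k * p.d * (T p.b + p.b) - p.a * p.b := rfl
@[simp] lemma inv_d (p : Nm k l) : (p⁻¹).d = -p.d := rfl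
instance : Group (Nm k l) where
  mul_assoc p q r := by
    ext <;> simp only [mul_a, mul_b, mul_c, mul_d, T_add] <;> ring
  one_mul p := by ext <;> simp [T_zero]
  mul_one p := by ext <;> simp [T_zero]
  inv_mul_cancel p := by
    have h := two_T p.b
    ext <;> simp only [mul_a, mul_b, mul_c, mul_d, inv_a, inv_b, inv_c, inv_d,
      one_a, one_b, one_c, one_d, T_neg]
    · ring
    · ring
    · linear_combination k * p.d * h
    · ring

/-- The generators in the model group. -/
def X : Nm k l := ⟨1, 0, 0, 0⟩
def Y : Nm k l := ⟨0, 1, 0, 0⟩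
def Z : Nm k l := ⟨0, 0, 1, 0⟩
def Tt : Nm k l := ⟨0, 0, 0, 1⟩

lemma X_zpow (n : ℤ) : (X : Nm k l) ^ n = ⟨n, 0, 0, 0⟩ := by
  induction n using Int.induction_on with
  | zero => rfl
  | succ i ih => rw [zpow_add_one, ih]; ext <;> simp [X, T_zero] <;> push_cast <;> ring
  | pred i ih => rw [zpow_sub_one, ih]; ext <;> simp [X, T_zero] <;> push_cast <;> ring

lemma Y_zpow (n : ℤ) : (Y : Nm k l) ^ n = ⟨0, n, 0, 0⟩ := by
  induction n using Int.induction_on with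
  | zero => rfl
  | succ i ih => rw [zpow_add_one, ih]; ext <;> simp [Y, T_one, T_zero] <;> push_cast <;> ring
  | pred i ih =>
      rw [zpow_sub_one, ih]
      have : T (-1 : ℤ) = 1 := by have := T_neg 1; simp [T_one] at this; omega
      ext <;> simp [Y, this, T_one, T_zero] <;> push_cast <;> ring

lemma Z_zpow (n : ℤ) : (Z : Nm k l) ^ n = ⟨0, 0, n, 0⟩ := by
  induction n using Int.induction_on with
  | zero => rfl
  | succ i ih => rw [zpow_add_one, ih]; ext <;> simp [Z, T_zero] <;> push_cast <;> ring
  | pred i ih => rw [zpow_sub_one, ih]; ext <;> simp [Z, T_zero] <;> push_cast <;> ring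

lemma Tt_zpow (n : ℤ) : (Tt : Nm k l) ^ n = ⟨0, 0, 0, n⟩ := by
  induction n using Int.induction_on with
  | zero => rfl
  | succ i ih => rw [zpow_add_one, ih]; ext <;> simp [Tt, T_zero] <;> push_cast <;> ring
  | pred i ih => rw [zpow_sub_one, ih]; ext <;> simp [Tt, T_zero] <;> push_cast <;> ring

/-- centrality predicate -/
def IsC (g : Nm k l) : Prop := ∀ h : Nm k l, g * h = h * g

lemma isC_center (c : ℤ) : IsC (⟨0, 0, c, 0⟩ : Nm k l) := by
  intro h; ext <;> simp [T_zero] <;> ring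

lemma coords_of_isC {g : Nm k l} (hk : k ≠ 0) (hg : IsC g) :
    g.a = 0 ∧ g.b = 0 ∧ g.d = 0 := by
  have hX := hg X
  have hY := hg Y
  have hb : g.b = 0 := by
    have := congrArg Nm.c hX
    simp [X, T_zero] at this; omega
  have hd : g.d = 0 := by
    have := congrArg Nm.a hY
    simp [Y, T_one] at this
    tauto
  have ha : g.a = 0 := by
    have := congrArg Nm.c hY
    simp [Y, T_one, hb, hd] at this; omega
  exact ⟨ha, hb, hd⟩

lemma X_not_isC (hk : k ≠ 0) : ¬ IsC (X : Nm k l) := by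
  intro h
  have := congrArg Nm.c (h Y)
  simp [X, Y, T_one, T_zero] at this

lemma isC_map (ψ : Nm k l ≃* Nm k l) {g : Nm k l} (hg : IsC g) : IsC (ψ g) := by
  intro h
  have : ψ g * h = ψ g * ψ (ψ.symm h) := by rw [ψ.apply_symm_apply]
  rw [this, ← map_mul, hg (ψ.symm h), map_mul, ψ.apply_symm_apply]

lemma comm_X_isC (h : Nm k l) : IsC (X * h * X⁻¹ * h⁻¹) := by
  obtain ⟨c, hc⟩ : ∃ c, X * h * X⁻¹ * h⁻¹ = (⟨0, 0, c, 0⟩ : Nm k l) := by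
    refine ⟨(X * h * X⁻¹ * h⁻¹).c, ?_⟩
    ext <;> simp [X, T_zero] <;> ring
  rw [hc]; exact isC_center c

end Nm

/- the normal form map -/
def sNm (p : Nm k l) : Γ k l :=
  xΓ k l ^ p.a * (yΓ k l ^ p.b * (zΓ k l ^ p.c * tΓ k l ^ p.d))

lemma step_x (m : Nm k l) : sNm k l (Nm.X * m) = xΓ k l * sNm k l m := by
  simp only [sNm, Nm.mul_a, Nm.mul_b, Nm.mul_c, Nm.mul_d, Nm.X]
  simp only [mul_zero, zero_mul, sub_zero, add_zero, zero_add, mul_one, one_mul]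
  group

lemma step_xinv (m : Nm k l) : sNm k l (Nm.X⁻¹ * m) = (xΓ k l)⁻¹ * sNm k l m := by
  simp only [sNm, Nm.mul_a, Nm.mul_b, Nm.mul_c, Nm.mul_d, Nm.inv_a, Nm.inv_b, Nm.inv_c,
    Nm.inv_d, Nm.X]
  simp only [mul_zero, zero_mul, sub_zero, add_zero, zero_add, mul_one, one_mul, neg_zero,
    neg_neg, T_zero]
  group

lemma step_z (m : Nm k l) : sNm k l (Nm.Z * m) = zΓ k l * sNm k l m := by
  simp only [sNm, Nm.mul_a, Nm.mul_b, Nm.mul_c, Nm.mul_d, Nm.Z]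
  simp only [mul_zero, zero_mul, sub_zero, add_zero, zero_add, mul_one, one_mul]
  conv_rhs => rw [← zpow_one (zΓ k l)]
  rw [mzx, mzy]
  group

lemma step_zinv (m : Nm k l) : sNm k l (Nm.Z⁻¹ * m) = (zΓ k l)⁻¹ * sNm k l m := by
  simp only [sNm, Nm.mul_a, Nm.mul_b, Nm.mul_c, Nm.mul_d, Nm.inv_a, Nm.inv_b, Nm.inv_c,
    Nm.inv_d, Nm.Z]
  simp only [mul_zero, zero_mul, sub_zero, add_zero, zero_add, mul_one, one_mul, neg_zero,
    neg_neg, T_zero]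
  conv_rhs => rw [← zpow_neg_one (zΓ k l)]
  rw [mzx, mzy]
  group

lemma step_y (m : Nm k l) : sNm k l (Nm.Y * m) = yΓ k l * sNm k l m := by
  simp only [sNm, Nm.mul_a, Nm.mul_b, Nm.mul_c, Nm.mul_d, Nm.Y]
  simp only [mul_zero, zero_mul, sub_zero, add_zero, zero_add, mul_one, one_mul]
  rw [u1, mzy]
  group

lemma step_yinv (m : Nm k l) : sNm k l (Nm.Y⁻¹ * m) = (yΓ k l)⁻¹ * sNm k l m := by
  simp only [sNm, Nm.mul_a, Nm.mul_b, Nm.mul_c, Nm.mul_d, Nm.inv_a, Nm.inv_b, Nm.inv_c,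
    Nm.inv_d, Nm.Y]
  simp only [mul_zero, zero_mul, sub_zero, add_zero, zero_add, mul_one, one_mul, neg_zero,
    neg_neg, T_zero]
  rw [u2, mzy]
  group

lemma step_t (m : Nm k l) : sNm k l (Nm.Tt * m) = tΓ k l * sNm k l m := by
  simp only [sNm, Nm.mul_a, Nm.mul_b, Nm.mul_c, Nm.mul_d, Nm.Tt]
  simp only [mul_zero, zero_mul, sub_zero, add_zero, zero_add, mul_one, one_mul]
  rw [mtx1, L7, mtz1]
  group

lemma step_tinv (m : Nm k l) : sNm k l (Nm.Tt⁻¹ * m) = (tΓ k l)⁻¹ * sNm k l m := by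
  simp only [sNm, Nm.mul_a, Nm.mul_b, Nm.mul_c, Nm.mul_d, Nm.inv_a, Nm.inv_b, Nm.inv_c,
    Nm.inv_d, Nm.Tt]
  simp only [mul_zero, zero_mul, sub_zero, add_zero, zero_add, mul_one, one_mul, neg_zero,
    neg_neg, T_zero]
  rw [mtx1', L7inv, mtz1']
  group

/- the homomorphism to the model -/
def fN : Fin 4 → Nm k l
  | 0 => Nm.X
  | 1 => Nm.Y
  | 2 => Nm.Z
  | 3 => Nm.Tt

lemma relsOK : ∀ r ∈ nilRels k l, FreeGroup.lift (fN k l) r = 1 := by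
  intro r hr
  simp only [nilRels, Set.mem_insert_iff, Set.mem_singleton_iff] at hr
  rcases hr with rfl | rfl | rfl | rfl | rfl | rfl <;>
    simp only [map_mul, map_inv, map_zpow, FreeGroup.lift_apply_of] <;>
    [skip; skip; skip; skip; skip; skip] <;>
    show _ = (1 : Nm k l)
  · ext <;> simp [fN, Nm.X, Nm.Tt, T_zero, T_neg, T_one] <;> ring
  · rw [show fN k l 0 = Nm.X from rfl, show fN k l 1 = Nm.Y from rfl,
      show fN k l 2 = Nm.Z from rfl, show fN k l 3 = Nm.Tt from rfl,
      Nm.X_zpow, Nm.Z_zpow]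
    ext <;> simp [Nm.Y, Nm.Tt, T_zero, T_neg, T_one] <;> ring
  · ext <;> simp [fN, Nm.Z, Nm.Tt, T_zero, T_neg, T_one] <;> ring
  · ext <;> simp [fN, Nm.X, Nm.Y, Nm.Z, T_zero, T_neg, T_one] <;> ring
  · ext <;> simp [fN, Nm.X, Nm.Z, T_zero, T_neg, T_one] <;> ring
  · ext <;> simp [fN, Nm.Y, Nm.Z, T_zero, T_neg, T_one] <;> ring

def π : Γ k l →* Nm k l := PresentedGroup.toGroup (relsOK k l)

lemma π_x : π k l (xΓ k l) = Nm.X := PresentedGroup.toGroup.of (relsOK k l)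
lemma π_y : π k l (yΓ k l) = Nm.Y := PresentedGroup.toGroup.of (relsOK k l)
lemma π_z : π k l (zΓ k l) = Nm.Z := PresentedGroup.toGroup.of (relsOK k l)
lemma π_t : π k l (tΓ k l) = Nm.Tt := PresentedGroup.toGroup.of (relsOK k l)

lemma pi_sNm (m : Nm k l) : π k l (sNm k l m) = m := by
  simp only [sNm, map_mul, map_zpow, π_x, π_y, π_z, π_t,
    Nm.X_zpow, Nm.Y_zpow, Nm.Z_zpow, Nm.Tt_zpow]
  ext <;> simp [T_zero] <;> ring

def mkΓ (w : FreeGroup (Fin 4)) : Γ k l := QuotientGroup.mk w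

lemma mkΓ_mul (u v : FreeGroup (Fin 4)) : mkΓ k l (u * v) = mkΓ k l u * mkΓ k l v := rfl

lemma s_pi : ∀ g : Γ k l, sNm k l (π k l g) = g := by
  have key : ∀ w : FreeGroup (Fin 4), ∀ h : Γ k l, sNm k l (π k l h) = h →
      sNm k l (π k l (mkΓ k l w * h)) = mkΓ k l w * h := by
    intro w
    induction w using FreeGroup.induction_on with
    | C1 =>
        intro h hh
        have h0 : mkΓ k l (1 : FreeGroup (Fin 4)) = 1 := rfl
        rw [h0, one_mul]; exact hh
    | of i =>
        intro h hh
        fin_cases i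
        · show sNm k l (π k l (xΓ k l * h)) = xΓ k l * h
          rw [map_mul, π_x, step_x, hh]
        · show sNm k l (π k l (yΓ k l * h)) = yΓ k l * h
          rw [map_mul, π_y, step_y, hh]
        · show sNm k l (π k l (zΓ k l * h)) = zΓ k l * h
          rw [map_mul, π_z, step_z, hh]
        · show sNm k l (π k l (tΓ k l * h)) = tΓ k l * h
          rw [map_mul, π_t, step_t, hh]
    | inv_of i _ =>
        intro h hh
        fin_cases i
        · show sNm k l (π k l ((xΓ k l)⁻¹ * h)) = (xΓ k l)⁻¹ * h
          rw [map_mul, map_inv, π_x, step_xinv, hh]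
        · show sNm k l (π k l ((yΓ k l)⁻¹ * h)) = (yΓ k l)⁻¹ * h
          rw [map_mul, map_inv, π_y, step_yinv, hh]
        · show sNm k l (π k l ((zΓ k l)⁻¹ * h)) = (zΓ k l)⁻¹ * h
          rw [map_mul, map_inv, π_z, step_zinv, hh]
        · show sNm k l (π k l ((tΓ k l)⁻¹ * h)) = (tΓ k l)⁻¹ * h
          rw [map_mul, map_inv, π_t, step_tinv, hh]
    | mul u v hu hv =>
        intro h hh
        have h0 : mkΓ k l (u * v) * h = mkΓ k l u * (mkΓ k l v * h) := by
          rw [mkΓ_mul]; group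
        rw [h0]
        exact hu _ (hv h hh)
  intro g
  obtain ⟨w, hw⟩ := QuotientGroup.mk_surjective (s := Subgroup.normalClosure (nilRels k l)) g
  have h1 : sNm k l (π k l (1 : Γ k l)) = 1 := by simp [sNm]
  have h2 := key w 1 h1
  rw [mul_one] at h2
  have hw' : mkΓ k l w = g := hw
  rwa [hw'] at h2

lemma π_bijective : Function.Bijective (π k l) := by
  constructor
  · intro g1 g2 h
    rw [← s_pi k l g1, ← s_pi k l g2, h]
  · intro m
    exact ⟨sNm k l m, pi_sNm k l m⟩
noncomputable def eΓ : Γ k l ≃* Nm k l := MulEquiv.ofBijective (π k l) (π_bijective k l)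

lemma eΓ_apply (g : Γ k l) : eΓ k l g = π k l g := rfl

/-- For integers `k ≥ 1` and `l` and every automorphism `φ` of `Γ k l`,
there exist integers `n` and `m` with `m ≠ 0` such that `φ(x) = zⁿ xᵐ`. -/
theorem stmt7 (k l : ℤ) (hk : 1 ≤ k) (φ : Γ k l ≃* Γ k l) :
    ∃ n m : ℤ, m ≠ 0 ∧ φ (xΓ k l) = zΓ k l ^ n * xΓ k l ^ m := by
  have hk0 : k ≠ 0 := by omega
  let e : Γ k l ≃* Nm k l := eΓ k l
  let ψ : Nm k l ≃* Nm k l := (e.symm.trans φ).trans e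
  set w := ψ Nm.X with hw
  have hcomm : ∀ g : Nm k l, Nm.IsC (w * g * w⁻¹ * g⁻¹) := by
    intro g
    have h2 := Nm.comm_X_isC (k := k) (l := l) (ψ.symm g)
    have h3 := Nm.isC_map ψ h2
    have h4 : ψ (Nm.X * ψ.symm g * Nm.X⁻¹ * (ψ.symm g)⁻¹) = w * g * w⁻¹ * g⁻¹ := by
      simp only [map_mul, map_inv, MulEquiv.apply_symm_apply, ← hw]
    rwa [h4] at h3
  have hd : w.d = 0 := by
    have h5 := (Nm.coords_of_isC hk0 (hcomm Nm.Y)).1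
    simp only [Nm.mul_a, Nm.mul_b, Nm.mul_c, Nm.mul_d, Nm.inv_a, Nm.inv_b, Nm.inv_d,
      Nm.Y] at h5
    have h6 : k * w.d = 0 := by linear_combination h5
    rcases mul_eq_zero.mp h6 with h | h
    · exact absurd h hk0
    · exact h
  have hb : w.b = 0 := by
    have h5 := (Nm.coords_of_isC hk0 (hcomm Nm.Tt)).1
    simp only [Nm.mul_a, Nm.mul_b, Nm.mul_c, Nm.mul_d, Nm.inv_a, Nm.inv_b, Nm.inv_d,
      Nm.Tt] at h5
    have h6 : k * w.b = 0 := by linear_combination -h5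
    rcases mul_eq_zero.mp h6 with h | h
    · exact absurd h hk0
    · exact h
  have hwa : w = Nm.Z ^ w.c * Nm.X ^ w.a := by
    rw [Nm.Z_zpow, Nm.X_zpow]
    ext <;> simp [hb, hd, T_zero] <;> ring
  have hm : w.a ≠ 0 := by
    intro h0
    have hC : Nm.IsC w := by
      have hww : w = (⟨0, 0, w.c, 0⟩ : Nm k l) := by ext <;> simp [h0, hb, hd]
      rw [hww]; exact Nm.isC_center w.c
    have h7 := Nm.isC_map ψ.symm hC
    rw [hw, MulEquiv.symm_apply_apply] at h7
    exact Nm.X_not_isC hk0 h7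
  refine ⟨w.c, w.a, hm, ?_⟩
  have hex : e (xΓ k l) = Nm.X := π_x k l
  have hez : e (zΓ k l) = Nm.Z := π_z k l
  have h6 : φ (xΓ k l) = e.symm (ψ Nm.X) := by
    rw [← hex]
    show φ (xΓ k l) = e.symm (e (φ (e.symm (e (xΓ k l)))))
    rw [MulEquiv.symm_apply_apply, MulEquiv.symm_apply_apply]
  have hwa' : e.symm w = zΓ k l ^ w.c * xΓ k l ^ w.a := by
    conv_lhs => rw [hwa]
    rw [map_mul, map_zpow, map_zpow,
      show e.symm Nm.Z = zΓ k l from by rw [← hez, MulEquiv.symm_apply_apply],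
      show e.symm Nm.X = xΓ k l from by rw [← hex, MulEquiv.symm_apply_apply]]
  rw [h6, ← hw]
  exact hwa'
end Stmt7
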